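/- Let 𝕂 = ℝ((t)) be the field of formal Laurent series over ℝ. For v ∈ 𝕂, let H(−1, v) denote the quaternion 𝕂-algebra generated by i, j with relations i² = −1, j² = v, ij = −ji. Then the three algebras H(−1, −1), H(−1, t) and H(−1, −t) are division rings, and they are pairwise non-isomorphic as 𝕂-algebras. -/

import Mathlib

noncomputable section AuxQSec

open HahnSeries

local notation "K" => LaurentSeries ℝ

/-- positive leading coefficient and even order -/
def AuxPos (z : K) : Prop := z ≠ 0 ∧ Even z.order ∧ 0 < z.coeff z.order

lemma aux_order_eq {z : K} {n : ℤ} (h0 : z.coeff n ≠ 0)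
    (hl : ∀ i < n, z.coeff i = 0) : z.order = n := by
  have hz : z ≠ 0 := fun h => h0 (by simp [h])
  have h1 := HahnSeries.order_le_of_coeff_ne_zero h0
  have h2 : ¬ z.order < n := fun hlt => (HahnSeries.coeff_order_eq_zero.not.mpr hz) (hl _ hlt)
  omega

lemma aux_pos_of_coeff {z : K} {n : ℤ} (hz : 0 < z.coeff n) (he : Even n)
    (hl : ∀ i < n, z.coeff i = 0) : AuxPos z := by
  have ho : z.order = n := aux_order_eq (ne_of_gt hz) hl
  exact ⟨fun h => by simp [h] at hz, by rw [ho]; exact he, by rw [ho]; exact hz⟩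

lemma aux_pos_add {a b : K} (ha : AuxPos a) (hb : AuxPos b) : AuxPos (a + b) := by
  obtain ⟨ha0, hae, hap⟩ := ha
  obtain ⟨hb0, hbe, hbp⟩ := hb
  rcases lt_trichotomy a.order b.order with h | h | h
  · refine aux_pos_of_coeff (n := a.order) ?_ hae ?_
    · rw [HahnSeries.coeff_add, HahnSeries.coeff_eq_zero_of_lt_order h, add_zero]; exact hap
    · intro i hi
      rw [HahnSeries.coeff_add, HahnSeries.coeff_eq_zero_of_lt_order hi,
        HahnSeries.coeff_eq_zero_of_lt_order (hi.trans h), add_zero]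
  · refine aux_pos_of_coeff (n := a.order) ?_ hae ?_
    · rw [HahnSeries.coeff_add]
      exact add_pos hap (by rw [h]; exact hbp)
    · intro i hi
      rw [HahnSeries.coeff_add, HahnSeries.coeff_eq_zero_of_lt_order hi,
        HahnSeries.coeff_eq_zero_of_lt_order (h ▸ hi), add_zero]
  · refine aux_pos_of_coeff (n := b.order) ?_ hbe ?_
    · rw [HahnSeries.coeff_add, HahnSeries.coeff_eq_zero_of_lt_order h, zero_add]; exact hbp
    · intro i hi
      rw [HahnSeries.coeff_add, HahnSeries.coeff_eq_zero_of_lt_order hi,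
        HahnSeries.coeff_eq_zero_of_lt_order (hi.trans h), add_zero]

lemma aux_pos_sq {x : K} (hx : x ≠ 0) : AuxPos (x * x) := by
  have hne : x * x ≠ 0 := mul_ne_zero hx hx
  have ho : (x * x).order = x.order + x.order := HahnSeries.order_mul hx hx
  refine ⟨hne, by rw [ho]; exact ⟨x.order, rfl⟩, ?_⟩
  have hc : (x * x).coeff (x.order + x.order) = x.leadingCoeff * x.leadingCoeff :=
    HahnSeries.coeff_mul_order_add_order x x
  rw [ho, hc]
  exact mul_self_pos.mpr (HahnSeries.leadingCoeff_ne_zero.mpr hx)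

lemma aux_pos_add' {a b : K} (ha : AuxPos a) (hb : b = 0 ∨ AuxPos b) : AuxPos (a + b) := by
  rcases hb with hb | hb
  · rw [hb, add_zero]; exact ha
  · exact aux_pos_add ha hb

lemma aux_sq_cases (x : K) : x * x = 0 ∨ AuxPos (x * x) := by
  by_cases hx : x = 0
  · left; rw [hx, mul_zero]
  · right; exact aux_pos_sq hx

lemma aux_sos2 {x y : K} (h : x * x + y * y = 0) : x = 0 ∧ y = 0 := by
  by_cases hx : x = 0
  · subst hx
    simp only [mul_zero, zero_add] at h
    exact ⟨rfl, by rcases mul_self_eq_zero.mp h with h; exact h⟩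
  · exact absurd h (aux_pos_add' (aux_pos_sq hx) (aux_sq_cases y)).1

lemma aux_sos4 {x y z w : K} (h : x * x + y * y + z * z + w * w = 0) :
    x = 0 ∧ y = 0 ∧ z = 0 ∧ w = 0 := by
  have h1 : (x * x + y * y) + (z * z + w * w) = 0 := by linear_combination h
  have hA : x * x + y * y = 0 := by
    by_contra hA
    have hx : x ≠ 0 ∨ y ≠ 0 := by
      by_contra hc
      push_neg at hc
      exact hA (by rw [hc.1, hc.2]; ring)
    have hPA : AuxPos (x * x + y * y) := by
      rcases hx with hx | hy
      · exact aux_pos_add' (aux_pos_sq hx) (aux_sq_cases y)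
      · rw [add_comm]; exact aux_pos_add' (aux_pos_sq hy) (aux_sq_cases x)
    have hB := aux_sq_cases z
    have hC := aux_sq_cases w
    have : AuxPos ((x * x + y * y) + (z * z + w * w)) := by
      rcases hB with hB | hB
      · rw [hB, zero_add]; exact aux_pos_add' hPA hC
      · rw [← add_assoc]; exact aux_pos_add' (aux_pos_add' hPA (Or.inr hB)) hC
    exact this.1 h1
  have hB : z * z + w * w = 0 := by rw [hA, zero_add] at h1; exact h1
  obtain ⟨h2, h3⟩ := aux_sos2 hA
  obtain ⟨h4, h5⟩ := aux_sos2 hB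
  exact ⟨h2, h3, h4, h5⟩

lemma aux_T_ne : (HahnSeries.single (1 : ℤ) (1 : ℝ) : K) ≠ 0 :=
  HahnSeries.single_ne_zero one_ne_zero

lemma aux_order_T : (HahnSeries.single (1 : ℤ) (1 : ℝ) : K).order = 1 :=
  HahnSeries.order_single one_ne_zero

/-- `c = ±t` times a nonzero element has odd order -/
lemma aux_odd_mul {c z : K}
    (hc : c = HahnSeries.single (1 : ℤ) (1 : ℝ) ∨ c = -HahnSeries.single (1 : ℤ) (1 : ℝ))
    (hz : z ≠ 0) (he : Even z.order) : c * z ≠ 0 ∧ Odd ((c * z).order) := by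
  have hc0 : c ≠ 0 := by
    rcases hc with h | h <;> rw [h] <;> simp [aux_T_ne]
  have hco : c.order = 1 := by
    rcases hc with h | h
    · rw [h]; exact aux_order_T
    · rw [h, HahnSeries.order_neg]; exact aux_order_T
  refine ⟨mul_ne_zero hc0 hz, ?_⟩
  rw [HahnSeries.order_mul hc0 hz, hco]
  rcases he with ⟨k, hk⟩
  exact ⟨k, by omega⟩

/-- even-order plus odd-order can't vanish -/
lemma aux_no_cancel {z w : K} (hz : z ≠ 0) (he : Even z.order) (ho : w ≠ 0 → Odd w.order) :
    z + w ≠ 0 := by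
  intro h
  have hw : w = -z := by linear_combination h
  have hw0 : w ≠ 0 := by rw [hw]; simpa using hz
  have := ho hw0
  rw [hw, HahnSeries.order_neg] at this
  rcases he with ⟨k, hk⟩
  rcases this with ⟨m, hm⟩
  omega

end AuxQSec
section QuatSec
open Quaternion HahnSeries

local notation "K" => LaurentSeries ℝ
local notation "T" => (HahnSeries.single (1 : ℤ) (1 : ℝ) : LaurentSeries ℝ)

set_option maxHeartbeats 2000000 in
lemma aux_isUnit {a b : K} (x : ℍ[K, a, b])
    (hN : x.re * x.re - a * x.imI * x.imI - b * x.imJ * x.imJ + a * b * x.imK * x.imK ≠ 0) :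
    IsUnit x := by
  set N : K := x.re * x.re - a * x.imI * x.imI - b * x.imJ * x.imJ + a * b * x.imK * x.imK with hNdef
  refine ⟨⟨x, N⁻¹ • star x, ?_, ?_⟩, rfl⟩ <;>
  apply QuaternionAlgebra.ext <;>
    simp only [QuaternionAlgebra.re_mul, QuaternionAlgebra.imI_mul, QuaternionAlgebra.imJ_mul,
      QuaternionAlgebra.imK_mul, QuaternionAlgebra.re_smul, QuaternionAlgebra.imI_smul,
      QuaternionAlgebra.imJ_smul, QuaternionAlgebra.imK_smul, QuaternionAlgebra.re_star,
      QuaternionAlgebra.imI_star, QuaternionAlgebra.imJ_star, QuaternionAlgebra.imK_star,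
      QuaternionAlgebra.re_one, QuaternionAlgebra.imI_one, QuaternionAlgebra.imJ_one,
      QuaternionAlgebra.imK_one, smul_eq_mul] <;>
    field_simp <;> ring

lemma aux_two_ne_zero : (2 : K) ≠ 0 := by
  intro h
  have h2 : ((2 : K)).coeff 0 = 2 := by
    rw [show (2 : K) = 1 + 1 from one_add_one_eq_two.symm, HahnSeries.coeff_add,
      HahnSeries.coeff_one]
    norm_num
  rw [h, HahnSeries.coeff_zero] at h2
  norm_num at h2

/-- squares of elements in `ℍ[K, -1, b]`, component equations. -/
lemma aux_sq_eqs {b : K} {q : ℍ[K, -1, b]} {c : K}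
    (h : q * q = algebraMap K ℍ[K, -1, b] c) :
    (q.re * q.re - q.imI * q.imI + b * q.imJ * q.imJ + b * q.imK * q.imK = c) ∧
      (q.re = 0 ∨ (q.imI = 0 ∧ q.imJ = 0 ∧ q.imK = 0)) := by
  have hre := congrArg QuaternionAlgebra.re h
  have hi := congrArg QuaternionAlgebra.imI h
  have hj := congrArg QuaternionAlgebra.imJ h
  have hk := congrArg QuaternionAlgebra.imK h
  simp only [QuaternionAlgebra.re_mul, QuaternionAlgebra.imI_mul, QuaternionAlgebra.imJ_mul,
    QuaternionAlgebra.imK_mul, QuaternionAlgebra.algebraMap_eq] at hre hi hj hk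
  constructor
  · linear_combination hre
  · by_cases h0 : q.re = 0
    · exact Or.inl h0
    · refine Or.inr ⟨?_, ?_, ?_⟩
      · have : q.re * q.imI * 2 = 0 := by linear_combination hi
        rcases mul_eq_zero.mp this with h | h
        · rcases mul_eq_zero.mp h with h | h
          · exact absurd h h0
          · exact h
        · exact absurd h aux_two_ne_zero
      · have : q.re * q.imJ * 2 = 0 := by linear_combination hj
        rcases mul_eq_zero.mp this with h | h
        · rcases mul_eq_zero.mp h with h | h
          · exact absurd h h0
          · exact h
        · exact absurd h aux_two_ne_zero
      · have : q.re * q.imK * 2 = 0 := by linear_combination hk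
        rcases mul_eq_zero.mp this with h | h
        · rcases mul_eq_zero.mp h with h | h
          · exact absurd h h0
          · exact h
        · exact absurd h aux_two_ne_zero

lemma aux_sq_even_ne {x c : K} (hc : c = T ∨ c = -T) (h : x * x = c) : False := by
  have hc0 : c ≠ 0 := by
    rcases hc with h' | h' <;> rw [h'] <;> simp [aux_T_ne]
  have hx : x ≠ 0 := by rintro rfl; rw [zero_mul] at h; exact hc0 h.symm
  have hp := aux_pos_sq hx
  have hco : c.order = 1 := by
    rcases hc with h' | h'
    · rw [h']; exact aux_order_T
    · rw [h', HahnSeries.order_neg]; exact aux_order_T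
  have : Even c.order := h ▸ hp.2.1
  rw [hco] at this
  rcases this with ⟨k, hk⟩
  omega

/-- no square root of `±T` in `ℍ[K,-1,-1]`. -/
lemma aux_no_sqrt_m1 {c : K} (hc : c = T ∨ c = -T) (q : ℍ[K, -1, -1])
    (h : q * q = algebraMap K ℍ[K, -1, -1] c) : False := by
  obtain ⟨hre, hcase⟩ := aux_sq_eqs h
  have hc0 : c ≠ 0 := by
    rcases hc with h' | h' <;> rw [h'] <;> simp [aux_T_ne]
  rcases hcase with h0 | ⟨h1, h2, h3⟩
  · -- pure case : -(sum of squares) = c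
    have hsum : q.imI * q.imI + q.imJ * q.imJ + q.imK * q.imK = -c := by
      rw [h0] at hre; linear_combination -hre
    have hs0 : q.imI * q.imI + q.imJ * q.imJ + q.imK * q.imK ≠ 0 := by
      rw [hsum]; simpa using hc0
    have hpos : AuxPos (q.imI * q.imI + q.imJ * q.imJ + q.imK * q.imK) := by
      have hI : q.imI ≠ 0 ∨ q.imJ ≠ 0 ∨ q.imK ≠ 0 := by
        by_contra hcon
        push_neg at hcon
        exact hs0 (by rw [hcon.1, hcon.2.1, hcon.2.2]; ring)
      rcases hI with h' | h' | h'
      · exact aux_pos_add' (aux_pos_add' (aux_pos_sq h') (aux_sq_cases _)) (aux_sq_cases _)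
      · rw [add_comm (q.imI * q.imI)]
        exact aux_pos_add' (aux_pos_add' (aux_pos_sq h') (aux_sq_cases _)) (aux_sq_cases _)
      · rw [add_comm _ (q.imK * q.imK)]
        exact aux_pos_add' (aux_pos_sq h') (Or.imp id (fun hh => hh) (by
          rcases aux_sq_cases q.imI with hA | hA <;> rcases aux_sq_cases q.imJ with hB | hB
          · left; rw [hA, hB, add_zero]
          · right; rw [hA, zero_add]; exact hB
          · right; rw [hB, add_zero]; exact hA
          · right; exact aux_pos_add hA hB))
    -- order of -c is 1, but order of a Pos element is even
    have hoc : (-c).order = 1 := by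
      rcases hc with h' | h'
      · rw [h', HahnSeries.order_neg]; exact aux_order_T
      · rw [h', neg_neg]; exact aux_order_T
    have := hsum ▸ hpos.2.1
    rw [hoc] at this
    rcases this with ⟨k, hk⟩
    omega
  · -- scalar case : q.re ^ 2 = c
    apply aux_sq_even_ne hc (x := q.re)
    linear_combination hre + q.imI * h1 + q.imJ * h2 + q.imK * h3

/-- no square root of `T` in `ℍ[K,-1,-T]`. -/
lemma aux_no_sqrt_mT (q : ℍ[K, -1, -T])
    (h : q * q = algebraMap K ℍ[K, -1, -T] T) : False := by
  obtain ⟨hre, hcase⟩ := aux_sq_eqs h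
  rcases hcase with h0 | ⟨h1, h2, h3⟩
  · -- pure : -imI² - T imJ² - T imK² = T, i.e. imI² + T(imJ²+imK²+1) = 0
    have key : q.imI * q.imI + T * (q.imJ * q.imJ + q.imK * q.imK + 1 * 1) = 0 := by
      rw [h0] at hre; linear_combination -hre
    have hPos : AuxPos (q.imJ * q.imJ + q.imK * q.imK + 1 * 1 : K) := by
      rw [add_comm]
      exact aux_pos_add' (aux_pos_sq one_ne_zero) (by
        rcases aux_sq_cases q.imJ with hA | hA <;> rcases aux_sq_cases q.imK with hB | hB
        · left; rw [hA, hB, add_zero]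
        · right; rw [hA, zero_add]; exact hB
        · right; rw [hB, add_zero]; exact hA
        · right; exact aux_pos_add hA hB)
    have hz := hPos.1
    have heven := hPos.2.1
    obtain ⟨hw0, hwodd⟩ := aux_odd_mul (Or.inl rfl) hz heven
    rcases aux_sq_cases q.imI with hA | hA
    · rw [hA, zero_add] at key; exact hw0 key
    · exact aux_no_cancel hA.1 hA.2.1 (fun _ => hwodd) key
  · apply aux_sq_even_ne (Or.inl rfl) (x := q.re)
    linear_combination hre + q.imI * h1 + T * q.imJ * h2 + T * q.imK * h3
lemma aux_sos2_pos {x y : K} (h : x * x + y * y ≠ 0) : AuxPos (x * x + y * y) := by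
  by_cases hx : x = 0
  · subst hx
    rw [zero_mul, zero_add] at h ⊢
    rcases aux_sq_cases y with h' | h'
    · exact absurd h' h
    · exact h'
  · exact aux_pos_add' (aux_pos_sq hx) (aux_sq_cases y)

lemma aux_j_sq (b : K) :
    (⟨0, 0, 1, 0⟩ : ℍ[K, -1, b]) * ⟨0, 0, 1, 0⟩ = algebraMap K ℍ[K, -1, b] b := by
  apply QuaternionAlgebra.ext <;>
    simp [QuaternionAlgebra.re_mul, QuaternionAlgebra.imI_mul, QuaternionAlgebra.imJ_mul,
      QuaternionAlgebra.imK_mul, QuaternionAlgebra.algebraMap_eq]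

/-- nonvanishing of `A + c*s` for `A` a sum of two squares, `s` a sum of two squares,
`c = ±T`, unless everything vanishes. -/
lemma aux_norm_pm {c : K} (hc : c = T ∨ c = -T) {x0 x1 x2 x3 : K}
    (h : (x0 * x0 + x1 * x1) + c * (x2 * x2 + x3 * x3) = 0) :
    x0 = 0 ∧ x1 = 0 ∧ x2 = 0 ∧ x3 = 0 := by
  have hc0 : c ≠ 0 := by
    rcases hc with h' | h' <;> rw [h'] <;> simp [aux_T_ne]
  by_cases hs : x2 * x2 + x3 * x3 = 0
  · obtain ⟨h2, h3⟩ := aux_sos2 hs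
    rw [hs, mul_zero, add_zero] at h
    obtain ⟨h0, h1⟩ := aux_sos2 h
    exact ⟨h0, h1, h2, h3⟩
  · exfalso
    have hPs := aux_sos2_pos hs
    obtain ⟨hw0, hwodd⟩ := aux_odd_mul hc hPs.1 hPs.2.1
    rcases aux_sq_cases x0 with hA | hA
    · rcases aux_sq_cases x1 with hB | hB
      · rw [hA, hB, add_zero, zero_add] at h; exact hw0 h
      · rw [hA, zero_add] at h
        exact aux_no_cancel hB.1 hB.2.1 (fun _ => hwodd) h
    · have hAB : AuxPos (x0 * x0 + x1 * x1) := aux_pos_add' hA (aux_sq_cases x1)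
      exact aux_no_cancel hAB.1 hAB.2.1 (fun _ => hwodd) h

end QuatSec

open Quaternion in
set_option maxSynthPendingDepth 2 in
set_option maxHeartbeats 1000000 in
/-- Over `𝕂 = ℝ((t))`, the quaternion algebras `H(-1,-1)`, `H(-1,t)` and
`H(-1,-t)` are division rings and are pairwise non-isomorphic as `𝕂`-algebras. -/
theorem quaternion_algebras_over_real_laurent_series
    (T : LaurentSeries ℝ) (hT : T = HahnSeries.single (1 : ℤ) (1 : ℝ)) :
    (∀ x : ℍ[LaurentSeries ℝ, -1, -1], x ≠ 0 → IsUnit x) ∧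
    (∀ x : ℍ[LaurentSeries ℝ, -1, T], x ≠ 0 → IsUnit x) ∧
    (∀ x : ℍ[LaurentSeries ℝ, -1, -T], x ≠ 0 → IsUnit x) ∧
    IsEmpty (ℍ[LaurentSeries ℝ, -1, -1] ≃ₐ[LaurentSeries ℝ] ℍ[LaurentSeries ℝ, -1, T]) ∧
    IsEmpty (ℍ[LaurentSeries ℝ, -1, -1] ≃ₐ[LaurentSeries ℝ] ℍ[LaurentSeries ℝ, -1, -T]) ∧
    IsEmpty (ℍ[LaurentSeries ℝ, -1, T] ≃ₐ[LaurentSeries ℝ] ℍ[LaurentSeries ℝ, -1, -T]) := by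
  subst hT
  set t : LaurentSeries ℝ := HahnSeries.single (1 : ℤ) (1 : ℝ) with ht
  refine ⟨?_, ?_, ?_, ?_, ?_, ?_⟩
  · intro x hx
    apply aux_isUnit
    intro hN
    have h : x.re * x.re + x.imI * x.imI + x.imJ * x.imJ + x.imK * x.imK = 0 := by
      linear_combination hN
    obtain ⟨h0, h1, h2, h3⟩ := aux_sos4 h
    exact hx (QuaternionAlgebra.ext h0 h1 h2 h3)
  · intro x hx
    apply aux_isUnit
    intro hN
    have h : (x.re * x.re + x.imI * x.imI) + (-t) * (x.imJ * x.imJ + x.imK * x.imK) = 0 := by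
      linear_combination hN
    obtain ⟨h0, h1, h2, h3⟩ := aux_norm_pm (Or.inr rfl) h
    exact hx (QuaternionAlgebra.ext h0 h1 h2 h3)
  · intro x hx
    apply aux_isUnit
    intro hN
    have h : (x.re * x.re + x.imI * x.imI) + t * (x.imJ * x.imJ + x.imK * x.imK) = 0 := by
      linear_combination hN
    obtain ⟨h0, h1, h2, h3⟩ := aux_norm_pm (Or.inl rfl) h
    exact hx (QuaternionAlgebra.ext h0 h1 h2 h3)
  · constructor
    intro φ
    refine aux_no_sqrt_m1 (Or.inl rfl) (φ.symm ⟨0, 0, 1, 0⟩) ?_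
    rw [← map_mul, aux_j_sq t, AlgEquiv.commutes]
  · constructor
    intro φ
    refine aux_no_sqrt_m1 (Or.inr rfl) (φ.symm ⟨0, 0, 1, 0⟩) ?_
    rw [← map_mul, aux_j_sq (-t), AlgEquiv.commutes]
  · constructor
    intro φ
    refine aux_no_sqrt_mT (φ ⟨0, 0, 1, 0⟩) ?_
    rw [← map_mul, aux_j_sq t, AlgEquiv.commutes]
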